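/- arXiv:2504.12524 — 4 statements merged into one kernel-verified Lean document; each statement's English description precedes it below -/
import Mathlib

section
/- For every real number m ∈ (0,1) and every integer k ≥ 2, the generalized binomial coefficient satisfies the strict bound |binom(m,k)| < Γ(m+1)·|sin(π(k−m−1))| / (π·(k−m−1)^{m+1}), where Γ denotes the Gamma function. -/
/-- Generalized binomial coefficient `binom(m,k) = m(m-1)⋯(m-(k-1))/k!`. -/
noncomputable def genBinom (m : ℝ) (k : ℕ) : ℝ :=
  (∏ i ∈ Finset.range k, (m - i)) / (Nat.factorial k)

lemma gamma_add_nat_aux (x : ℝ) (hx : 0 < x) (n : ℕ) :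
    Real.Gamma (x + n) = (∏ i ∈ Finset.range n, (x + i)) * Real.Gamma x := by
  induction n with
  | zero => simp
  | succ n ih =>
    have h : x + (n + 1 : ℕ) = (x + n) + 1 := by push_cast; ring
    rw [h, Real.Gamma_add_one (by positivity), ih, Finset.prod_range_succ]
    ring

lemma key_gamma_ineq {x m : ℝ} (hx : 0 < x) (hm : 0 < m) :
    Real.Gamma (x + 1) * x ^ (m + 1) < Real.Gamma (x + m + 2) := by
  have hG1 : 0 < Real.Gamma (x + 1) := Real.Gamma_pos_of_pos (by linarith)
  have hG2 : 0 < Real.Gamma (x + 2) := Real.Gamma_pos_of_pos (by linarith)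
  have hG3 : 0 < Real.Gamma (x + m + 2) := Real.Gamma_pos_of_pos (by linarith)
  have ha : (0:ℝ) ≤ m / (m + 1) := by positivity
  have hb : (0:ℝ) ≤ 1 / (m + 1) := by positivity
  have hab : m / (m + 1) + 1 / (m + 1) = 1 := by field_simp
  have hc := Real.convexOn_log_Gamma.2 (Set.mem_Ioi.mpr (by linarith : (0:ℝ) < x + 1))
      (Set.mem_Ioi.mpr (by linarith : (0:ℝ) < x + m + 2)) ha hb hab
  have hpt : (m / (m + 1)) • (x + 1) + (1 / (m + 1)) • (x + m + 2) = x + 2 := by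
    have h1 : m + 1 ≠ 0 := by linarith
    simp only [smul_eq_mul]
    rw [div_mul_eq_mul_div, div_mul_eq_mul_div, ← add_div, div_eq_iff h1]
    ring
  rw [hpt] at hc
  simp only [smul_eq_mul, Function.comp_apply] at hc
  have hlog : (m + 1) * Real.log (Real.Gamma (x + 2)) ≤
      m * Real.log (Real.Gamma (x + 1)) + Real.log (Real.Gamma (x + m + 2)) := by
    have hmp : (0:ℝ) < m + 1 := by linarith
    have h := mul_le_mul_of_nonneg_left hc (le_of_lt hmp)
    calc (m + 1) * Real.log (Real.Gamma (x + 2))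
        ≤ (m + 1) * (m / (m + 1) * Real.log (Real.Gamma (x + 1)) +
            1 / (m + 1) * Real.log (Real.Gamma (x + m + 2))) := h
      _ = m * Real.log (Real.Gamma (x + 1)) + Real.log (Real.Gamma (x + m + 2)) := by
          field_simp
  have h2 : Real.Gamma (x + 2) ^ (m + 1) ≤
      Real.Gamma (x + 1) ^ m * Real.Gamma (x + m + 2) := by
    rw [Real.rpow_def_of_pos hG2, Real.rpow_def_of_pos hG1]
    rw [← Real.exp_log hG3, ← Real.exp_add, Real.exp_le_exp]
    nlinarith [hlog]
  have hG2eq : Real.Gamma (x + 2) = (x + 1) * Real.Gamma (x + 1) := by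
    have h : x + 2 = (x + 1) + 1 := by ring
    rw [h, Real.Gamma_add_one (by positivity)]
  have h3 : (x + 1) ^ (m + 1) * Real.Gamma (x + 1) ≤ Real.Gamma (x + m + 2) := by
    have hmr : Real.Gamma (x + 2) ^ (m + 1) =
        (x + 1) ^ (m + 1) * (Real.Gamma (x + 1) ^ m * Real.Gamma (x + 1)) := by
      rw [hG2eq, Real.mul_rpow (by positivity) (le_of_lt hG1)]
      rw [show m + 1 = m + (1:ℝ) from rfl, Real.rpow_add hG1, Real.rpow_one]
    rw [hmr] at h2
    have hGm : (0:ℝ) < Real.Gamma (x + 1) ^ m := by positivity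
    have := le_of_mul_le_mul_right (by nlinarith [h2] :
      (x + 1) ^ (m + 1) * Real.Gamma (x + 1) * Real.Gamma (x+1) ^ m ≤
        Real.Gamma (x + m + 2) * Real.Gamma (x+1) ^ m) hGm
    exact this
  have h4 : x ^ (m + 1) < (x + 1) ^ (m + 1) :=
    Real.rpow_lt_rpow (le_of_lt hx) (lt_add_one x) (by linarith)
  nlinarith [h4, h3, hG1]

theorem genBinom_abs_lt (m : ℝ) (hm : m ∈ Set.Ioo (0 : ℝ) 1) (k : ℕ) (hk : 2 ≤ k) :
    |genBinom m k| <
      Real.Gamma (m + 1) * |Real.sin (Real.pi * ((k : ℝ) - m - 1))| /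
        (Real.pi * ((k : ℝ) - m - 1) ^ (m + 1)) := by
  obtain ⟨hm0, hm1⟩ := hm
  obtain ⟨n, rfl⟩ : ∃ n, k = n + 1 := ⟨k - 1, by omega⟩
  have hn : 1 ≤ n := by omega
  have hk2 : (2:ℝ) ≤ ((n:ℝ) + 1) := by
    have : (1:ℝ) ≤ (n:ℝ) := by exact_mod_cast hn
    linarith
  set x : ℝ := ((n + 1 : ℕ) : ℝ) - m - 1 with hxdef
  have hxn : x = (n:ℝ) - m := by rw [hxdef]; push_cast; ring
  have hx : 0 < x := by rw [hxn]; push_cast at hk2 ⊢; linarith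
  have hπ : 0 < Real.pi := Real.pi_pos
  have hS : 0 < Real.sin (Real.pi * m) := by
    apply Real.sin_pos_of_pos_of_lt_pi
    · positivity
    · nlinarith
  have h1m : (0:ℝ) < 1 - m := by linarith
  have hGm : 0 < Real.Gamma (1 - m) := Real.Gamma_pos_of_pos h1m
  have hF : (0:ℝ) < ((n+1).factorial : ℝ) := by positivity
  have hX : (0:ℝ) < x ^ (m + 1) := Real.rpow_pos_of_pos hx _
  -- Step A: the sine simplification
  have hsin : |Real.sin (Real.pi * x)| = Real.sin (Real.pi * m) := by
    have h1 : Real.pi * x = -(Real.pi * (m + 1)) + ((n + 1 : ℤ) : ℝ) * Real.pi := by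
      rw [hxn]; push_cast; ring
    rw [h1, Real.sin_add_int_mul_pi]
    have h2 : Real.sin (-(Real.pi * (m + 1))) = Real.sin (Real.pi * m) := by
      rw [Real.sin_neg]
      rw [show Real.pi * (m + 1) = Real.pi * m + Real.pi by ring, Real.sin_add_pi]
      ring
    rw [h2, abs_mul, abs_of_pos hS]
    have habs1 : |((-1:ℝ)) ^ ((n:ℤ) + 1)| = 1 := by
      rw [show ((n:ℤ) + 1) = ((n + 1 : ℕ) : ℤ) by push_cast; ring, zpow_natCast,
        abs_pow, abs_neg, abs_one, one_pow]
    rw [habs1, one_mul]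
  -- Step B: |genBinom|
  have hprod : ∏ i ∈ Finset.range n, |m - ((i:ℝ) + 1)| =
      Real.Gamma (x + 1) / Real.Gamma (1 - m) := by
    have hcong : ∀ i ∈ Finset.range n, |m - ((i:ℝ) + 1)| = (1 - m) + i := by
      intro i _
      rw [abs_of_nonpos (by
        have : (0:ℝ) ≤ (i:ℝ) := Nat.cast_nonneg i
        linarith)]
      ring
    rw [Finset.prod_congr rfl hcong]
    have hg := gamma_add_nat_aux (1 - m) h1m n
    have hx1 : (1 - m) + (n:ℝ) = x + 1 := by rw [hxn]; ring
    rw [hx1] at hg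
    rw [eq_div_iff (ne_of_gt hGm)]
    exact hg.symm
  have habs : |genBinom m (n + 1)| =
      m * (Real.Gamma (x + 1) / Real.Gamma (1 - m)) / ((n+1).factorial : ℝ) := by
    unfold genBinom
    rw [abs_div, abs_of_pos hF, Finset.prod_range_succ', abs_mul, Finset.abs_prod]
    simp only [Nat.cast_zero, sub_zero]
    rw [abs_of_pos hm0]
    have : ∏ i ∈ Finset.range n, |m - ((i + 1 : ℕ) : ℝ)| =
        ∏ i ∈ Finset.range n, |m - ((i:ℝ) + 1)| := by
      apply Finset.prod_congr rfl
      intro i _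
      push_cast
      ring_nf
    rw [this, hprod]
    ring
  rw [habs, hsin]
  -- Final inequality
  have hkey := key_gamma_ineq hx hm0
  have hfac : Real.Gamma (x + m + 2) = ((n+1).factorial : ℝ) := by
    have h : x + m + 2 = ((n + 1 : ℕ) : ℝ) + 1 := by rw [hxn]; push_cast; ring
    rw [h, Real.Gamma_nat_eq_factorial]
  rw [hfac] at hkey
  have hrefl : Real.Gamma m * Real.Gamma (1 - m) = Real.pi / Real.sin (Real.pi * m) :=
    Real.Gamma_mul_Gamma_one_sub m
  have hrefl' : Real.Gamma m * Real.Gamma (1 - m) * Real.sin (Real.pi * m) = Real.pi := by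
    rw [hrefl]; field_simp
  have hGm1 : Real.Gamma (m + 1) = m * Real.Gamma m := Real.Gamma_add_one (ne_of_gt hm0)
  rw [show m * (Real.Gamma (x + 1) / Real.Gamma (1 - m)) / ((n+1).factorial : ℝ)
      = m * Real.Gamma (x + 1) / (Real.Gamma (1 - m) * ((n+1).factorial : ℝ)) by
    field_simp]
  rw [div_lt_div_iff₀ (by positivity) (by positivity)]
  rw [hGm1]
  calc m * Real.Gamma (x + 1) * (Real.pi * x ^ (m + 1))
      = m * Real.pi * (Real.Gamma (x + 1) * x ^ (m + 1)) := by ring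
    _ < m * Real.pi * ((n+1).factorial : ℝ) :=
        mul_lt_mul_of_pos_left hkey (by positivity)
    _ = m * Real.Gamma m * Real.sin (Real.pi * m) *
        (Real.Gamma (1 - m) * ((n+1).factorial : ℝ)) := by
        linear_combination (m * ((n+1).factorial : ℝ)) * hrefl'.symm
end

section
/- Fix integers n ≥ 1, ℓ ≥ 2 and N ≥ 2(n+ℓ+2), m ∈ (0,1), α ∈ [0,1] and 0 ≤ j ≤ n. Then E_{ν_α}[c^{m,j}] = α^n·Σ_{k=0}^{ℓ} (−1)^k·binom(m,k)·(1−α)^k. -/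
/-- Occupation value of a site, regarded as a real number. -/
def occ (b : Bool) : ℝ := if b then 1 else 0

/-- Projection to the discrete torus `T_N = ZMod N` of the integer interval `⟦a,b⟧`. -/
noncomputable def torusBox (N : ℕ) (a b : ℤ) : Finset (ZMod N) :=
  (Finset.Icc a b).image (fun i : ℤ => (i : ZMod N))

/-- The set of sites `⟦-j, -j+L+1⟧ \ {0,1}` in the torus (`L` sites). -/
noncomputable def sites (N : ℕ) (j L : ℕ) : Finset (ZMod N) :=
  torusBox N (-(j : ℤ)) (-(j : ℤ) + L + 1) \ {0, 1}

/-- `𝔫_j^L(η)`: the number of particles of `η` in `⟦-j, -j+L+1⟧ \ {0,1}`. -/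
noncomputable def nnum (N : ℕ) (j L : ℕ) (η : ZMod N → Bool) : ℕ :=
  ((sites N j L).filter (fun i => η i = true)).card

/-- Bernoulli product weight `ν_α({η})`. -/
noncomputable def bwt (N : ℕ) [NeZero N] (α : ℝ) (η : ZMod N → Bool) : ℝ :=
  ∏ x : ZMod N, (if η x then α else 1 - α)

/-- PMM(n) constraint component `p_n^j(η) = ∏_{i ∈ ⟦-j,-j+n+1⟧∖{0,1}} η(i)`. -/
noncomputable def pj (N n j : ℕ) (η : ZMod N → Bool) : ℝ :=
  ∏ i ∈ sites N j n, occ (η i)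

/-- Auxiliary constraint component
`p_{n,k}^j(η) = (binom(𝔫_j^{n+k}(η),n)/binom(n+k,n))·𝟙{𝔫_j^{n+k}(η) ≥ n+1}`. -/
noncomputable def pkj (N n k j : ℕ) (η : ZMod N → Bool) : ℝ :=
  ((nnum N j (n + k) η).choose n : ℝ) / ((n + k).choose n : ℝ) *
    (if n + 1 ≤ nnum N j (n + k) η then 1 else 0)

/-- Component `c^{m,j}` of the interpolating constraint. -/
noncomputable def cmj (N n ℓ : ℕ) (m : ℝ) (j : ℕ) (η : ZMod N → Bool) : ℝ :=
  pj N n j η + ∑ k ∈ Finset.Icc 1 ℓ, (-1 : ℝ) ^ k * genBinom m k * (pj N n j η - pkj N n k j η)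

open Finset in
lemma sum_prod_eq (N : ℕ) [NeZero N] (f : ZMod N → Bool → ℝ) :
    ∑ η : ZMod N → Bool, ∏ x, f x (η x) = ∏ x, (f x true + f x false) := by
  rw [← Fintype.piFinset_univ, ← Finset.prod_univ_sum]
  simp

open Finset in
lemma expect_TU (N : ℕ) [NeZero N] (α : ℝ) (T U : Finset (ZMod N)) (hTU : Disjoint T U) :
    ∑ η : ZMod N → Bool,
      ((∏ x ∈ T, occ (η x)) * ∏ x ∈ U, (1 - occ (η x))) * bwt N α η
      = α ^ T.card * (1 - α) ^ U.card := by
  have h1 : ∀ η : ZMod N → Bool,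
      ((∏ x ∈ T, occ (η x)) * ∏ x ∈ U, (1 - occ (η x))) * bwt N α η
      = ∏ x : ZMod N, ((fun x (b : Bool) => (if x ∈ T then occ b else 1) *
          (if x ∈ U then (1 - occ b) else 1) * (if b then α else 1 - α)) x (η x)) := by
    intro η
    simp only [bwt, Finset.prod_mul_distrib]
    congr 1
    congr 1
    · rw [Finset.prod_ite_mem, Finset.univ_inter]
    · rw [Finset.prod_ite_mem, Finset.univ_inter]
  simp only [h1]
  rw [sum_prod_eq N (fun x (b : Bool) => (if x ∈ T then occ b else 1) *
          (if x ∈ U then (1 - occ b) else 1) * (if b then α else 1 - α))]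
  have h2 : ∀ x : ZMod N,
      ((if x ∈ T then occ true else 1) * (if x ∈ U then (1 - occ true) else 1) *
          (if (true : Bool) then α else 1 - α)
        + (if x ∈ T then occ false else 1) * (if x ∈ U then (1 - occ false) else 1) *
          (if (false : Bool) then α else 1 - α))
      = (if x ∈ T then α else 1) * (if x ∈ U then (1 - α) else 1) := by
    intro x
    by_cases hT : x ∈ T
    · have hU : x ∉ U := fun hU => (Finset.disjoint_left.mp hTU hT) hU
      simp [hT, hU, occ]
    · by_cases hU : x ∈ U <;> simp [hT, hU, occ]
  calc ∏ x : ZMod N, _ = ∏ x : ZMod N, ((if x ∈ T then α else 1) * (if x ∈ U then (1 - α) else 1)) :=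
        Finset.prod_congr rfl (fun x _ => h2 x)
    _ = α ^ T.card * (1 - α) ^ U.card := by
        rw [Finset.prod_mul_distrib, Finset.prod_ite_mem, Finset.univ_inter,
          Finset.prod_ite_mem, Finset.univ_inter, Finset.prod_const, Finset.prod_const]

lemma card_sites (N j L : ℕ) (hjL : j ≤ L) (hLN : L + 2 ≤ N) :
    (sites N j L).card = L := by
  have hN2 : 1 < N := by omega
  haveI : Fact (1 < N) := ⟨hN2⟩
  set a : ℤ := -(j : ℤ)
  set b : ℤ := a + L + 1
  have hinj : Set.InjOn (fun i : ℤ => (i : ZMod N)) (Finset.Icc a b : Set ℤ) := by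
    intro x hx y hy hxy
    simp only [Finset.coe_Icc, Set.mem_Icc] at hx hy
    have hdvd : (N : ℤ) ∣ y - x := ((ZMod.intCast_eq_intCast_iff x y N).mp hxy).dvd
    have : y - x = 0 := Int.eq_zero_of_abs_lt_dvd hdvd (by
      rw [abs_lt]
      constructor <;> [skip; skip] <;> omega)
    omega
  have hcardBox : (torusBox N a b).card = L + 2 := by
    rw [torusBox, Finset.card_image_of_injOn hinj, Int.card_Icc]
    simp only [a, b]
    omega
  have h0 : (0 : ZMod N) ∈ torusBox N a b := by
    refine Finset.mem_image.mpr ⟨0, ?_, by simp⟩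
    simp only [Finset.mem_Icc]; omega
  have h1 : (1 : ZMod N) ∈ torusBox N a b := by
    refine Finset.mem_image.mpr ⟨1, ?_, by simp⟩
    simp only [Finset.mem_Icc]; omega
  have hsub : ({0, 1} : Finset (ZMod N)) ⊆ torusBox N a b := by
    intro x hx
    simp only [Finset.mem_insert, Finset.mem_singleton] at hx
    rcases hx with rfl | rfl
    · exact h0
    · exact h1
  have hcard01 : ({0, 1} : Finset (ZMod N)).card = 2 := by
    rw [Finset.card_insert_of_notMem (by simp), Finset.card_singleton]
  rw [sites, Finset.card_sdiff_of_subset hsub, hcardBox, hcard01]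
  omega

open Finset in
lemma sum_prod_occ (N n : ℕ) [NeZero N] (S : Finset (ZMod N)) (η : ZMod N → Bool) :
    ∑ T ∈ S.powersetCard n, ∏ x ∈ T, occ (η x)
      = (((S.filter (fun i => η i = true)).card.choose n : ℕ) : ℝ) := by
  set F := S.filter (fun i => η i = true) with hF
  have h1 : ∀ T ∈ S.powersetCard n, (∏ x ∈ T, occ (η x)) = if T ⊆ F then (1:ℝ) else 0 := by
    intro T hT
    rw [Finset.mem_powersetCard] at hT
    by_cases h : T ⊆ F
    · rw [if_pos h]
      apply Finset.prod_eq_one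
      intro x hx
      have := (Finset.mem_filter.mp (h hx)).2
      simp [occ, this]
    · rw [if_neg h]
      obtain ⟨x, hxT, hxF⟩ := Finset.not_subset.mp h
      apply Finset.prod_eq_zero hxT
      have hη : η x = false := by
        by_contra hc
        exact hxF (Finset.mem_filter.mpr ⟨hT.1 hxT, by simpa using hc⟩)
      simp [occ, hη]
  rw [Finset.sum_congr rfl h1, ← Finset.sum_filter, Finset.sum_const, nsmul_eq_mul, mul_one]
  have h2 : (S.powersetCard n).filter (fun T => T ⊆ F) = F.powersetCard n := by
    ext T
    simp only [Finset.mem_filter, Finset.mem_powersetCard]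
    constructor
    · rintro ⟨⟨_, hc⟩, hTF⟩
      exact ⟨hTF, hc⟩
    · rintro ⟨hTF, hc⟩
      exact ⟨⟨hTF.trans (Finset.filter_subset _ _), hc⟩, hTF⟩
  rw [h2, Finset.card_powersetCard]

open Finset in
lemma sum_prod_occ_exact (N n : ℕ) [NeZero N] (S : Finset (ZMod N)) (η : ZMod N → Bool) :
    ∑ T ∈ S.powersetCard n, (∏ x ∈ T, occ (η x)) * ∏ x ∈ S \ T, (1 - occ (η x))
      = if (S.filter (fun i => η i = true)).card = n then (1:ℝ) else 0 := by
  set F := S.filter (fun i => η i = true) with hF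
  have h1 : ∀ T ∈ S.powersetCard n,
      (∏ x ∈ T, occ (η x)) * ∏ x ∈ S \ T, (1 - occ (η x)) = if F = T then (1:ℝ) else 0 := by
    intro T hT
    rw [Finset.mem_powersetCard] at hT
    by_cases h : F = T
    · rw [if_pos h]
      have e1 : ∏ x ∈ T, occ (η x) = 1 := by
        apply Finset.prod_eq_one
        intro x hx
        have hxF : x ∈ F := h ▸ hx
        simp [occ, (Finset.mem_filter.mp hxF).2]
      have e2 : ∏ x ∈ S \ T, (1 - occ (η x)) = 1 := by
        apply Finset.prod_eq_one
        intro x hx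
        rcases Finset.mem_sdiff.mp hx with ⟨hxS, hxT⟩
        have hη : η x = false := by
          by_contra hc
          exact hxT (h ▸ Finset.mem_filter.mpr ⟨hxS, by simpa using hc⟩)
        simp [occ, hη]
      rw [e1, e2, mul_one]
    · rw [if_neg h]
      by_cases hTF : T ⊆ F
      · have hFT : ¬ F ⊆ T := fun hFT => h (Finset.Subset.antisymm hFT hTF)
        obtain ⟨x, hxF, hxT⟩ := Finset.not_subset.mp hFT
        rcases Finset.mem_filter.mp hxF with ⟨hxS, hxη⟩
        rw [Finset.prod_eq_zero (Finset.mem_sdiff.mpr ⟨hxS, hxT⟩)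
          (by simp [occ, hxη]), mul_zero]
      · obtain ⟨x, hxT, hxF⟩ := Finset.not_subset.mp hTF
        have hη : η x = false := by
          by_contra hc
          exact hxF (Finset.mem_filter.mpr ⟨hT.1 hxT, by simpa using hc⟩)
        rw [Finset.prod_eq_zero hxT (by simp [occ, hη]), zero_mul]
  rw [Finset.sum_congr rfl h1, Finset.sum_ite_eq]
  by_cases hFmem : F ∈ S.powersetCard n
  · rw [if_pos hFmem, if_pos (Finset.mem_powersetCard.mp hFmem).2]
  · rw [if_neg hFmem, if_neg]
    intro hc
    exact hFmem (Finset.mem_powersetCard.mpr ⟨Finset.filter_subset _ _, hc⟩)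

open Finset in
lemma expect_T (N : ℕ) [NeZero N] (α : ℝ) (T : Finset (ZMod N)) :
    ∑ η : ZMod N → Bool, (∏ x ∈ T, occ (η x)) * bwt N α η = α ^ T.card := by
  have := expect_TU N α T ∅ (Finset.disjoint_empty_right T)
  simpa using this

open Finset in
lemma expect_pj' (N n j : ℕ) [NeZero N] (α : ℝ) (hjn : j ≤ n) (hNn : n + 2 ≤ N) :
    ∑ η : ZMod N → Bool, pj N n j η * bwt N α η = α ^ n := by
  have := expect_T N α (sites N j n)
  rw [card_sites N j n hjn hNn] at this
  simpa [pj] using this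

open Finset in
lemma expect_pkj' (N n k j : ℕ) [NeZero N] (α : ℝ) (hk : 1 ≤ k)
    (hjnk : j ≤ n + k) (hNk : n + k + 2 ≤ N) :
    ∑ η : ZMod N → Bool, pkj N n k j η * bwt N α η = α ^ n * (1 - (1 - α) ^ k) := by
  set S := sites N j (n + k) with hSdef
  have hS : S.card = n + k := card_sites N j (n + k) hjnk hNk
  have hC0 : (0:ℝ) < (((n + k).choose n : ℕ) : ℝ) := by
    exact_mod_cast Nat.choose_pos (Nat.le_add_right n k)
  have hC : (((n + k).choose n : ℕ) : ℝ) ≠ 0 := ne_of_gt hC0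
  have hpt : ∀ η : ZMod N → Bool, pkj N n k j η =
      ((∑ T ∈ S.powersetCard n, ∏ x ∈ T, occ (η x)) -
        ∑ T ∈ S.powersetCard n, (∏ x ∈ T, occ (η x)) * ∏ x ∈ S \ T, (1 - occ (η x)))
        / (((n + k).choose n : ℕ) : ℝ) := by
    intro η
    rw [sum_prod_occ, sum_prod_occ_exact]
    have hrnum : (S.filter (fun i => η i = true)).card = nnum N j (n + k) η := rfl
    rw [hrnum, pkj]
    set r := nnum N j (n + k) η with hr
    rcases lt_trichotomy r n with h | h | h
    · rw [Nat.choose_eq_zero_of_lt h, if_neg (by omega : ¬ n + 1 ≤ r),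
        if_neg (by omega : ¬ r = n)]
      simp
    · rw [h, Nat.choose_self, if_neg (by omega : ¬ n + 1 ≤ n), if_pos rfl]
      simp
    · rw [if_pos (by omega : n + 1 ≤ r), if_neg (by omega : ¬ r = n)]
      ring
  have hswap1 : ∑ η : ZMod N → Bool,
      (∑ T ∈ S.powersetCard n, ∏ x ∈ T, occ (η x)) * bwt N α η
      = (((n + k).choose n : ℕ) : ℝ) * α ^ n := by
    simp only [Finset.sum_mul]
    rw [Finset.sum_comm]
    have : ∀ T ∈ S.powersetCard n,
        ∑ η : ZMod N → Bool, (∏ x ∈ T, occ (η x)) * bwt N α η = α ^ n := by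
      intro T hT
      rw [expect_T, (Finset.mem_powersetCard.mp hT).2]
    rw [Finset.sum_congr rfl this, Finset.sum_const, Finset.card_powersetCard, hS,
      nsmul_eq_mul]
  have hswap2 : ∑ η : ZMod N → Bool,
      (∑ T ∈ S.powersetCard n, (∏ x ∈ T, occ (η x)) * ∏ x ∈ S \ T, (1 - occ (η x))) * bwt N α η
      = (((n + k).choose n : ℕ) : ℝ) * (α ^ n * (1 - α) ^ k) := by
    simp only [Finset.sum_mul]
    rw [Finset.sum_comm]
    have : ∀ T ∈ S.powersetCard n,
        ∑ η : ZMod N → Bool,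
          ((∏ x ∈ T, occ (η x)) * ∏ x ∈ S \ T, (1 - occ (η x))) * bwt N α η
          = α ^ n * (1 - α) ^ k := by
      intro T hT
      rcases Finset.mem_powersetCard.mp hT with ⟨hTS, hTc⟩
      rw [expect_TU N α T (S \ T) Finset.disjoint_sdiff, hTc,
        Finset.card_sdiff_of_subset hTS, hS, hTc]
      congr 2
      omega
    rw [Finset.sum_congr rfl this, Finset.sum_const, Finset.card_powersetCard, hS,
      nsmul_eq_mul]
  calc ∑ η : ZMod N → Bool, pkj N n k j η * bwt N α η
      = (∑ η : ZMod N → Bool,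
          (∑ T ∈ S.powersetCard n, ∏ x ∈ T, occ (η x)) * bwt N α η
        - ∑ η : ZMod N → Bool,
          (∑ T ∈ S.powersetCard n, (∏ x ∈ T, occ (η x)) * ∏ x ∈ S \ T, (1 - occ (η x)))
            * bwt N α η) / (((n + k).choose n : ℕ) : ℝ) := by
        rw [← Finset.sum_sub_distrib]
        rw [Finset.sum_div]
        apply Finset.sum_congr rfl
        intro η _
        rw [hpt η, div_mul_eq_mul_div, sub_mul]
    _ = α ^ n * (1 - (1 - α) ^ k) := by
        rw [hswap1, hswap2]
        field_simp

theorem cmj_expectation (N n ℓ : ℕ) [NeZero N]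
    (hn : 1 ≤ n) (hℓ : 2 ≤ ℓ) (hN : 2 * (n + ℓ + 2) ≤ N)
    (m : ℝ) (hm : m ∈ Set.Ioo (0 : ℝ) 1) (α : ℝ) (hα : α ∈ Set.Icc (0 : ℝ) 1)
    (j : ℕ) (hj : j ≤ n) :
    ∑ η : ZMod N → Bool, cmj N n ℓ m j η * bwt N α η
      = α ^ n * ∑ k ∈ Finset.range (ℓ + 1), (-1 : ℝ) ^ k * genBinom m k * (1 - α) ^ k := by
  have hEp : ∑ η : ZMod N → Bool, pj N n j η * bwt N α η = α ^ n :=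
    expect_pj' N n j α hj (by omega)
  have hEk : ∀ k ∈ Finset.Icc 1 ℓ,
      ∑ η : ZMod N → Bool, pkj N n k j η * bwt N α η = α ^ n * (1 - (1 - α) ^ k) := by
    intro k hk
    rcases Finset.mem_Icc.mp hk with ⟨hk1, hk2⟩
    exact expect_pkj' N n k j α hk1 (by omega) (by omega)
  have hsplit : Finset.range (ℓ + 1) = insert 0 (Finset.Icc 1 ℓ) := by
    ext x
    simp only [Finset.mem_range, Finset.mem_insert, Finset.mem_Icc]
    omega
  have hg0 : genBinom m 0 = 1 := by simp [genBinom]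
  calc ∑ η : ZMod N → Bool, cmj N n ℓ m j η * bwt N α η
      = ∑ η : ZMod N → Bool, (pj N n j η * bwt N α η
          + ∑ k ∈ Finset.Icc 1 ℓ, (-1:ℝ)^k * genBinom m k *
            (pj N n j η * bwt N α η - pkj N n k j η * bwt N α η)) := by
        apply Finset.sum_congr rfl
        intro η _
        rw [cmj, add_mul, Finset.sum_mul]
        congr 1
        apply Finset.sum_congr rfl
        intro k _
        ring
    _ = α ^ n + ∑ k ∈ Finset.Icc 1 ℓ, (-1:ℝ)^k * genBinom m k *
          (α ^ n - α ^ n * (1 - (1 - α) ^ k)) := by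
        rw [Finset.sum_add_distrib, hEp]
        congr 1
        rw [Finset.sum_comm]
        apply Finset.sum_congr rfl
        intro k hk
        rw [← Finset.mul_sum, Finset.sum_sub_distrib, hEp, hEk k hk]
    _ = α ^ n * ∑ k ∈ Finset.range (ℓ + 1), (-1:ℝ)^k * genBinom m k * (1 - α)^k := by
        rw [hsplit, Finset.sum_insert (by simp), hg0, mul_add, Finset.mul_sum]
        simp only [pow_zero, one_mul, mul_one]
        congr 1
        apply Finset.sum_congr rfl
        intro k _
        ring
end

section
/- Fix integers n ≥ 1, ℓ ≥ 2 and N ≥ 2(n+ℓ+2), and m ∈ (0,1). Set δ_ℓ = 1 − Σ_{k=1}^{ℓ} |binom(m,k)|. Then δ_ℓ > 0, and for every η ∈ Ω_N the interpolating constraint satisfies the decomposition c^m(η) = δ_ℓ·p_n(η) + m·p_{n,1}(η) + Σ_{k=2}^{ℓ} |binom(m,k)|·p_{n,k}(η); consequently 0 ≤ c^m(η) ≤ 1 for every η ∈ Ω_N. -/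
/-- The normalized PMM(n) constraint `p_n = (1/(n+1))·Σ_{j=0}^{n} p_n^j`. -/
noncomputable def pn (N n : ℕ) (η : ZMod N → Bool) : ℝ :=
  (1 / ((n : ℝ) + 1)) * ∑ j ∈ Finset.range (n + 1), pj N n j η

/-- The normalized auxiliary constraint `p_{n,k} = (1/(n+k+1))·Σ_{j=0}^{n+k} p_{n,k}^j`. -/
noncomputable def pnk (N n k : ℕ) (η : ZMod N → Bool) : ℝ :=
  (1 / ((n : ℝ) + k + 1)) * ∑ j ∈ Finset.range (n + k + 1), pkj N n k j η

/-- The interpolating constraint `c^m`. -/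
noncomputable def cm (N n ℓ : ℕ) (m : ℝ) (η : ZMod N → Bool) : ℝ :=
  pn N n η + ∑ k ∈ Finset.Icc 1 ℓ, (-1 : ℝ) ^ k * genBinom m k * (pn N n η - pnk N n k η)

lemma genBinom_succ (m : ℝ) (k : ℕ) :
    genBinom m (k+1) = genBinom m k * ((m - k) / (k+1)) := by
  unfold genBinom
  rw [Finset.prod_range_succ, Nat.factorial_succ]
  push_cast
  rw [div_mul_div_comm]
  ring

lemma genBinom_one (m : ℝ) : genBinom m 1 = m := by
  simp [genBinom]

lemma genBinom_ne_zero {m : ℝ} (hm : m ∈ Set.Ioo (0:ℝ) 1) (k : ℕ) : genBinom m k ≠ 0 := by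
  unfold genBinom
  apply div_ne_zero
  · apply Finset.prod_ne_zero_iff.2
    intro i _
    rcases Nat.eq_zero_or_pos i with h | h
    · subst h; simpa using ne_of_gt hm.1
    · have : m < i := lt_of_lt_of_le hm.2 (by exact_mod_cast h)
      linarith
  · positivity

lemma abs_genBinom_succ {m : ℝ} (hm : m ∈ Set.Ioo (0:ℝ) 1) {k : ℕ} (hk : 1 ≤ k) :
    |genBinom m (k+1)| = |genBinom m k| * (((k:ℝ) - m) / (k+1)) := by
  rw [genBinom_succ, abs_mul, abs_div]
  have h1 : m < k := lt_of_lt_of_le hm.2 (by exact_mod_cast hk)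
  rw [abs_of_nonpos (by linarith : m - (k:ℝ) ≤ 0), abs_of_pos (by positivity : (0:ℝ) < (k:ℝ)+1)]
  ring

lemma neg_pow_genBinom {m : ℝ} (hm : m ∈ Set.Ioo (0:ℝ) 1) :
    ∀ k, 1 ≤ k → (-1:ℝ)^k * genBinom m k = -|genBinom m k| := by
  intro k hk
  induction k with
  | zero => omega
  | succ k ih =>
    rcases Nat.eq_zero_or_pos k with h | h
    · subst h
      simp [genBinom_one, abs_of_pos hm.1]
    · have hik := ih h
      rw [abs_genBinom_succ hm h, genBinom_succ, pow_succ]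
      have h1 : (0:ℝ) < (k:ℝ)+1 := by positivity
      linear_combination (-(m - (k:ℝ))/((k:ℝ)+1)) * hik

lemma delta_key {m : ℝ} (hm : m ∈ Set.Ioo (0:ℝ) 1) :
    ∀ ℓ, 1 ≤ ℓ → m * (1 - ∑ k ∈ Finset.Icc 1 ℓ, |genBinom m k|) = |genBinom m ℓ| * ((ℓ:ℝ) - m) := by
  intro ℓ hℓ
  induction ℓ with
  | zero => omega
  | succ ℓ ih =>
    rcases Nat.eq_zero_or_pos ℓ with h | h
    · subst h
      simp [genBinom_one, abs_of_pos hm.1]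
    · have hI : Finset.Icc 1 (ℓ+1) = insert (ℓ+1) (Finset.Icc 1 ℓ) := by
        ext x; simp [Finset.mem_Icc]; omega
      rw [hI, Finset.sum_insert (by simp), abs_genBinom_succ hm h]
      have hik := ih h
      have hℓ1 : (0:ℝ) < (ℓ:ℝ) + 1 := by positivity
      push_cast
      field_simp
      nlinarith [hik]

lemma delta_pos' {m : ℝ} (hm : m ∈ Set.Ioo (0:ℝ) 1) {ℓ : ℕ} (hℓ : 1 ≤ ℓ) :
    0 < 1 - ∑ k ∈ Finset.Icc 1 ℓ, |genBinom m k| := by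
  have h := delta_key hm ℓ hℓ
  have h1 : 0 < |genBinom m ℓ| := abs_pos.2 (genBinom_ne_zero hm ℓ)
  have h2 : (0:ℝ) < (ℓ:ℝ) - m := by
    have : (1:ℝ) ≤ ℓ := by exact_mod_cast hℓ
    linarith [hm.2]
  nlinarith [hm.1]

lemma sites_card_le (N : ℕ) (j L : ℕ) (hN : 2 ≤ N) (hj : j ≤ L) :
    (sites N j L).card ≤ L := by
  have h01 : ({0, 1} : Finset (ZMod N)) ⊆ torusBox N (-(j : ℤ)) (-(j : ℤ) + L + 1) := by
    intro x hx
    simp only [Finset.mem_insert, Finset.mem_singleton] at hx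
    rcases hx with h | h <;> subst h
    · refine Finset.mem_image.2 ⟨0, ?_, by simp⟩
      simp [Finset.mem_Icc]; omega
    · refine Finset.mem_image.2 ⟨1, ?_, by simp⟩
      simp only [Finset.mem_Icc]; omega
  have hcard01 : ({0, 1} : Finset (ZMod N)).card = 2 := by
    haveI : Fact (1 < N) := ⟨hN⟩
    rw [Finset.card_insert_of_notMem (by simp)]
    simp
  have hbox : (torusBox N (-(j : ℤ)) (-(j : ℤ) + L + 1)).card ≤ L + 2 := by
    calc (torusBox N (-(j : ℤ)) (-(j : ℤ) + L + 1)).card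
        ≤ (Finset.Icc (-(j : ℤ)) (-(j : ℤ) + L + 1)).card := Finset.card_image_le
      _ = L + 2 := by rw [Int.card_Icc]; omega
  rw [sites, Finset.card_sdiff_of_subset h01, hcard01]
  omega

lemma pj_mem (N n j : ℕ) (η : ZMod N → Bool) : 0 ≤ pj N n j η ∧ pj N n j η ≤ 1 := by
  constructor
  · exact Finset.prod_nonneg (fun i _ => by simp only [occ]; split <;> norm_num)
  · exact Finset.prod_le_one (fun i _ => by simp only [occ]; split <;> norm_num)
      (fun i _ => by simp only [occ]; split <;> norm_num)

lemma pkj_mem (N n k j : ℕ) (η : ZMod N → Bool) (hN : 2 ≤ N) (hj : j ≤ n + k) :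
    0 ≤ pkj N n k j η ∧ pkj N n k j η ≤ 1 := by
  have h1 : nnum N j (n+k) η ≤ n + k :=
    le_trans (Finset.card_filter_le _ _) (sites_card_le N j (n+k) hN hj)
  have h2 : (0:ℝ) < ((n + k).choose n : ℝ) := by
    exact_mod_cast Nat.choose_pos (Nat.le_add_right n k)
  have h3 : ((nnum N j (n+k) η).choose n : ℝ) ≤ ((n + k).choose n : ℝ) := by
    exact_mod_cast Nat.choose_le_choose n h1
  constructor
  · apply mul_nonneg (by positivity)
    split <;> norm_num
  · apply mul_le_one₀ (by rw [div_le_one h2]; exact h3) (by split <;> norm_num)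
      (by split <;> norm_num)

lemma pn_mem (N n : ℕ) (η : ZMod N → Bool) : 0 ≤ pn N n η ∧ pn N n η ≤ 1 := by
  have hp : (0:ℝ) < (n:ℝ) + 1 := by positivity
  constructor
  · exact mul_nonneg (by positivity)
      (Finset.sum_nonneg fun j _ => (pj_mem N n j η).1)
  · rw [pn]
    have hs : ∑ j ∈ Finset.range (n + 1), pj N n j η ≤ (n:ℝ) + 1 := by
      calc ∑ j ∈ Finset.range (n + 1), pj N n j η
          ≤ ∑ j ∈ Finset.range (n + 1), (1:ℝ) :=
            Finset.sum_le_sum fun j _ => (pj_mem N n j η).2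
        _ = (n:ℝ) + 1 := by simp
    rw [one_div, inv_mul_le_iff₀ hp, mul_one]
    exact hs

lemma pnk_mem (N n k : ℕ) (η : ZMod N → Bool) (hN : 2 ≤ N) :
    0 ≤ pnk N n k η ∧ pnk N n k η ≤ 1 := by
  have hp : (0:ℝ) < (n:ℝ) + k + 1 := by positivity
  constructor
  · apply mul_nonneg (by positivity)
    exact Finset.sum_nonneg fun j hj =>
      (pkj_mem N n k j η hN (by simp [Finset.mem_range] at hj; omega)).1
  · rw [pnk]
    have hs : ∑ j ∈ Finset.range (n + k + 1), pkj N n k j η ≤ (n:ℝ) + k + 1 := by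
      calc ∑ j ∈ Finset.range (n + k + 1), pkj N n k j η
          ≤ ∑ j ∈ Finset.range (n + k + 1), (1:ℝ) :=
            Finset.sum_le_sum fun j hj =>
              (pkj_mem N n k j η hN (by simp [Finset.mem_range] at hj; omega)).2
        _ = (n:ℝ) + k + 1 := by simp
    rw [one_div, inv_mul_le_iff₀ hp, mul_one]
    exact hs

theorem cm_decomposition (N n ℓ : ℕ) [NeZero N]
    (hn : 1 ≤ n) (hℓ : 2 ≤ ℓ) (hN : 2 * (n + ℓ + 2) ≤ N)
    (m : ℝ) (hm : m ∈ Set.Ioo (0 : ℝ) 1) :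
    0 < 1 - ∑ k ∈ Finset.Icc 1 ℓ, |genBinom m k| ∧
    ∀ η : ZMod N → Bool,
      cm N n ℓ m η
          = (1 - ∑ k ∈ Finset.Icc 1 ℓ, |genBinom m k|) * pn N n η
            + m * pnk N n 1 η
            + ∑ k ∈ Finset.Icc 2 ℓ, |genBinom m k| * pnk N n k η
        ∧ 0 ≤ cm N n ℓ m η ∧ cm N n ℓ m η ≤ 1 := by
  have hN2 : 2 ≤ N := by omega
  have hδ : 0 < 1 - ∑ k ∈ Finset.Icc 1 ℓ, |genBinom m k| := delta_pos' hm (by omega)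
  refine ⟨hδ, fun η => ?_⟩
  -- key identity: cm = (1 - S) * pn + ∑_{k∈Icc 1 ℓ} |b_k| * pnk
  have key : cm N n ℓ m η
      = (1 - ∑ k ∈ Finset.Icc 1 ℓ, |genBinom m k|) * pn N n η
        + ∑ k ∈ Finset.Icc 1 ℓ, |genBinom m k| * pnk N n k η := by
    rw [cm]
    have : ∀ k ∈ Finset.Icc 1 ℓ,
        (-1:ℝ)^k * genBinom m k * (pn N n η - pnk N n k η)
          = -(|genBinom m k| * pn N n η) + |genBinom m k| * pnk N n k η := by
      intro k hk
      rw [neg_pow_genBinom hm k (Finset.mem_Icc.1 hk).1]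
      ring
    rw [Finset.sum_congr rfl this, Finset.sum_add_distrib, Finset.sum_neg_distrib]
    rw [← Finset.sum_mul]
    ring
  have hsplit : ∑ k ∈ Finset.Icc 1 ℓ, |genBinom m k| * pnk N n k η
      = m * pnk N n 1 η + ∑ k ∈ Finset.Icc 2 ℓ, |genBinom m k| * pnk N n k η := by
    have hI : Finset.Icc 1 ℓ = insert 1 (Finset.Icc 2 ℓ) := by
      ext x; simp [Finset.mem_Icc]; omega
    rw [hI, Finset.sum_insert (by simp)]
    rw [genBinom_one, abs_of_pos hm.1]
  refine ⟨by rw [key, hsplit]; ring, ?_, ?_⟩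
  · rw [key]
    apply add_nonneg
    · exact mul_nonneg hδ.le (pn_mem N n η).1
    · exact Finset.sum_nonneg fun k _ =>
        mul_nonneg (abs_nonneg _) (pnk_mem N n k η hN2).1
  · rw [key]
    have h1 : (1 - ∑ k ∈ Finset.Icc 1 ℓ, |genBinom m k|) * pn N n η
        ≤ 1 - ∑ k ∈ Finset.Icc 1 ℓ, |genBinom m k| :=
      mul_le_of_le_one_right hδ.le (pn_mem N n η).2
    have h2 : ∑ k ∈ Finset.Icc 1 ℓ, |genBinom m k| * pnk N n k η
        ≤ ∑ k ∈ Finset.Icc 1 ℓ, |genBinom m k| :=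
      Finset.sum_le_sum fun k _ =>
        mul_le_of_le_one_right (abs_nonneg _) (pnk_mem N n k η hN2).2
    linarith
end

section
/- Fix integers n ≥ 1, ℓ ≥ 2, N ≥ 2(n+ℓ+2) and m ∈ (0,1). Then the interpolating constraint c^m satisfies the gradient condition: there exists a function H : Ω_N → ℝ such that for every configuration η ∈ Ω_N, c^m(η)·(η(1) − η(0)) = H(τη) − H(η), where (τη)(x) = η(x+1). -/
/-- The shift `(τη)(x) = η(x+1)`. -/
def shift (N : ℕ) (η : ZMod N → Bool) : ZMod N → Bool := fun x => η (x + 1)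


/-! ### Auxiliary definitions -/

/-- Boolean occupation as a natural number. -/
def bv (c : Bool) : ℕ := if c = true then 1 else 0

lemma occ_eq_bv (b : Bool) : occ b = (bv b : ℝ) := by cases b <;> simp [occ, bv]

/-- Shift by a general torus element. -/
def sg (N : ℕ) (t : ZMod N) (η : ZMod N → Bool) : ZMod N → Bool := fun x => η (x + t)

lemma sg_zero {N : ℕ} (η : ZMod N → Bool) : sg N 0 η = η := by funext x; simp [sg]

lemma sg_shift {N : ℕ} (t : ZMod N) (η : ZMod N → Bool) :
    sg N t (shift N η) = sg N (t + 1) η := by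
  funext x; simp [sg, shift, add_assoc]

lemma cast_image_eq_univ (N : ℕ) [NeZero N] :
    (Finset.range N).image (fun i : ℕ => (i : ZMod N)) = Finset.univ := by
  apply Finset.eq_univ_of_card
  rw [Finset.card_image_of_injOn, Finset.card_range, ZMod.card]
  intro a ha b hb h
  have ha' : a < N := Finset.mem_range.mp ha
  have hb' : b < N := Finset.mem_range.mp hb
  have := congrArg ZMod.val h
  rwa [ZMod.val_cast_of_lt ha', ZMod.val_cast_of_lt hb'] at this

lemma sum_range_zmod (N : ℕ) [NeZero N] (g : ZMod N → ℝ) :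
    ∑ i ∈ Finset.range N, g (i : ZMod N) = ∑ x : ZMod N, g x := by
  rw [← cast_image_eq_univ N, Finset.sum_image]
  intro a ha b hb h
  have ha' : a < N := Finset.mem_range.mp ha
  have hb' : b < N := Finset.mem_range.mp hb
  have := congrArg ZMod.val h
  rwa [ZMod.val_cast_of_lt ha', ZMod.val_cast_of_lt hb'] at this

lemma sum_shift_zmod (N : ℕ) [NeZero N] (g : ZMod N → ℝ) (c : ZMod N) :
    ∑ x : ZMod N, g (x + c) = ∑ x : ZMod N, g x :=
  Fintype.sum_equiv (Equiv.addRight c) _ _ (fun _ => rfl)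

/-! ### Gradient from vanishing orbit sums -/

lemma gradient_of_orbit_sum_zero (N : ℕ) [NeZero N] (f : (ZMod N → Bool) → ℝ)
    (hf : ∀ η, ∑ t : ZMod N, f (sg N t η) = 0) :
    ∃ H : (ZMod N → Bool) → ℝ, ∀ η, f η = H (shift N η) - H η := by
  refine ⟨fun η => (1 / (N : ℝ)) * ∑ t ∈ Finset.range N, (t : ℝ) * f (sg N (t : ZMod N) η),
    fun η => ?_⟩
  have hNR : (N : ℝ) ≠ 0 := Nat.cast_ne_zero.mpr (NeZero.ne N)
  have hcyc : ∑ t ∈ Finset.range N, f (sg N ((t : ZMod N) + 1) η) = 0 := by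
    have := sum_range_zmod N (fun s => f (sg N (s + 1) η))
    rw [this, sum_shift_zmod N (fun s => f (sg N s η)) 1, hf]
  have main : ∑ t ∈ Finset.range N, (t : ℝ) * f (sg N ((t : ZMod N) + 1) η)
      - ∑ t ∈ Finset.range N, (t : ℝ) * f (sg N (t : ZMod N) η) = (N : ℝ) * f η := by
    have tel := Finset.sum_range_sub (fun t : ℕ => (t : ℝ) * f (sg N (t : ZMod N) η)) N
    have cast1 : ∀ t : ℕ, (((t + 1 : ℕ)) : ZMod N) = (t : ZMod N) + 1 := fun t => by
      push_cast; ring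
    simp only [cast1] at tel
    rw [ZMod.natCast_self, sg_zero, Finset.sum_sub_distrib] at tel
    have h2 : ∑ t ∈ Finset.range N, ((t : ℝ) * f (sg N ((t : ZMod N) + 1) η))
        = ∑ t ∈ Finset.range N,
            (((t + 1 : ℕ) : ℝ) * f (sg N ((t : ZMod N) + 1) η) - f (sg N ((t : ZMod N) + 1) η)) := by
      refine Finset.sum_congr rfl fun t _ => ?_
      push_cast; ring
    rw [h2, Finset.sum_sub_distrib, hcyc, sub_zero]
    push_cast at tel ⊢
    linarith [tel]
  have hsh : ∑ t ∈ Finset.range N, (t : ℝ) * f (sg N (t : ZMod N) (shift N η))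
      = ∑ t ∈ Finset.range N, (t : ℝ) * f (sg N ((t : ZMod N) + 1) η) :=
    Finset.sum_congr rfl fun t _ => by rw [sg_shift]
  simp only []
  beta_reduce
  rw [hsh]
  field_simp
  linarith [main]

/-! ### Window counts -/

/-- Count of particles in the window `x, x+1, …, x+L-1`. -/
def wcount (N L : ℕ) (η : ZMod N → Bool) (x : ZMod N) : ℕ :=
  ∑ i ∈ Finset.range L, bv (η (x + (i : ZMod N)))

lemma wcount_succ (N L : ℕ) (η : ZMod N → Bool) (x : ZMod N) :
    wcount N (L + 1) η x = wcount N L η x + bv (η (x + (L : ZMod N))) :=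
  Finset.sum_range_succ _ _

lemma wcount_succ' (N L : ℕ) (η : ZMod N → Bool) (x : ZMod N) :
    wcount N (L + 1) η x = bv (η x) + wcount N L η (x + 1) := by
  unfold wcount
  rw [Finset.sum_range_succ']
  rw [add_comm]
  congr 1
  · simp
  · refine Finset.sum_congr rfl fun i _ => ?_
    congr 1
    push_cast
    ring

/-! ### Structure of `sites` -/

lemma torusBox_eq (N j L : ℕ) :
    torusBox N (-(j : ℤ)) (-(j : ℤ) + L + 1)
      = (Finset.range (L + 2)).image (fun i : ℕ => (i : ZMod N) - (j : ZMod N)) := by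
  unfold torusBox
  have h1 : Finset.Icc (-(j : ℤ)) (-(j : ℤ) + L + 1)
      = (Finset.range (L + 2)).image (fun i : ℕ => (i : ℤ) - j) := by
    ext m
    simp only [Finset.mem_Icc, Finset.mem_image, Finset.mem_range]
    constructor
    · rintro ⟨ha, hb⟩
      exact ⟨(m + j).toNat, by omega, by omega⟩
    · rintro ⟨i, hi, rfl⟩
      omega
  rw [h1, Finset.image_image]
  refine Finset.image_congr fun i _ => ?_
  simp only [Function.comp_apply]
  push_cast
  ring

lemma phi_injOn (N L : ℕ) (hL : L + 2 ≤ N) (j : ℕ) :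
    ∀ i₁ ∈ Finset.range (L + 2), ∀ i₂ ∈ Finset.range (L + 2),
      (i₁ : ZMod N) - (j : ZMod N) = (i₂ : ZMod N) - (j : ZMod N) → i₁ = i₂ := by
  intro i₁ h1 i₂ h2 h
  haveI : NeZero N := ⟨by omega⟩
  have h' : (i₁ : ZMod N) = (i₂ : ZMod N) := by linear_combination h
  have := congrArg ZMod.val h'
  rwa [ZMod.val_cast_of_lt (by have := Finset.mem_range.mp h1; omega),
    ZMod.val_cast_of_lt (by have := Finset.mem_range.mp h2; omega)] at this

lemma zero_mem_phi (N L j : ℕ) (hj : j ≤ L) :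
    (0 : ZMod N) ∈ (Finset.range (L + 2)).image (fun i : ℕ => (i : ZMod N) - (j : ZMod N)) := by
  refine Finset.mem_image.mpr ⟨j, Finset.mem_range.mpr (by omega), by simp⟩

lemma one_mem_phi (N L j : ℕ) (hj : j ≤ L) :
    (1 : ZMod N) ∈ (Finset.range (L + 2)).image (fun i : ℕ => (i : ZMod N) - (j : ZMod N)) := by
  refine Finset.mem_image.mpr ⟨j + 1, Finset.mem_range.mpr (by omega), by push_cast; ring⟩

lemma pair_subset_phi (N L j : ℕ) (hN : 2 ≤ N) (hj : j ≤ L) :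
    ({0, 1} : Finset (ZMod N))
      ⊆ (Finset.range (L + 2)).image (fun i : ℕ => (i : ZMod N) - (j : ZMod N)) := by
  intro x hx
  rcases Finset.mem_insert.mp hx with h | h
  · rw [h]; exact zero_mem_phi N L j hj
  · rw [Finset.mem_singleton.mp h]; exact one_mem_phi N L j hj

lemma nnum_add (N j L : ℕ) (hL : L + 2 ≤ N) (hj : j ≤ L) (η : ZMod N → Bool) :
    nnum N j L η + bv (η 0) + bv (η 1)
      = ∑ i ∈ Finset.range (L + 2), bv (η ((i : ZMod N) - (j : ZMod N))) := by
  haveI : NeZero N := ⟨by omega⟩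
  haveI : Fact (1 < N) := ⟨by omega⟩
  have hinj := phi_injOn N L hL j
  have h01 := pair_subset_phi N L j (by omega) hj
  have hcard : nnum N j L η
      = ∑ x ∈ (Finset.range (L + 2)).image (fun i : ℕ => (i : ZMod N) - (j : ZMod N)) \ {0, 1},
          bv (η x) := by
    unfold nnum sites
    rw [torusBox_eq, Finset.card_filter]
    exact Finset.sum_congr rfl fun x _ => rfl
  have hsplit := Finset.sum_sdiff (f := fun x => bv (η x)) h01
  have hpair : ∑ x ∈ ({0, 1} : Finset (ZMod N)), bv (η x) = bv (η 0) + bv (η 1) :=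
    Finset.sum_pair zero_ne_one
  have himage : ∑ x ∈ (Finset.range (L + 2)).image (fun i : ℕ => (i : ZMod N) - (j : ZMod N)),
      bv (η x) = ∑ i ∈ Finset.range (L + 2), bv (η ((i : ZMod N) - (j : ZMod N))) :=
    Finset.sum_image hinj
  rw [hcard, ← himage, ← hsplit, hpair]
  exact add_assoc _ _ _

lemma nnum_sg (N j L : ℕ) (hL : L + 2 ≤ N) (hj : j ≤ L) (η : ZMod N → Bool) (t : ZMod N) :
    nnum N j L (sg N t η) + bv (η t) + bv (η (t + 1))
      = wcount N (L + 2) η (t - (j : ZMod N)) := by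
  have h := nnum_add N j L hL hj (sg N t η)
  simp only [sg] at h
  rw [zero_add] at h
  rw [show (1 : ZMod N) + t = t + 1 from add_comm _ _] at h
  rw [h]
  unfold wcount
  refine Finset.sum_congr rfl fun i _ => ?_
  congr 1
  ring

/-! ### The key vanishing orbit sum for window constraints -/

lemma orbit_sum_window (N L : ℕ) [NeZero N] (hL : L + 2 ≤ N) (q : ℕ → ℝ) (η : ZMod N → Bool) :
    ∑ t : ZMod N, (∑ j ∈ Finset.range (L + 1), q (nnum N j L (sg N t η)))
        * (occ (η (t + 1)) - occ (η t)) = 0 := by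
  set d : ZMod N → ℝ := fun t => occ (η (t + 1)) - occ (η t) with hd
  set Ψ : ℕ → ℝ := fun r => ∑ s ∈ Finset.range r, q s with hΨ
  have step1 : ∀ (t : ZMod N) (j : ℕ), j ≤ L →
      q (nnum N j L (sg N t η)) * d t
        = q (wcount N (L + 2) η (t - (j : ZMod N)) - 1) * d t := by
    intro t j hj
    by_cases h : η t = η (t + 1)
    · have hdz : d t = 0 := by rw [hd]; simp only; rw [h]; ring
      rw [hdz, mul_zero, mul_zero]
    · have hb : bv (η t) + bv (η (t + 1)) = 1 := by
        cases h1 : η t <;> cases h2 : η (t + 1) <;> simp_all [bv]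
      have hns := nnum_sg N j L hL hj η t
      have : nnum N j L (sg N t η) = wcount N (L + 2) η (t - (j : ZMod N)) - 1 := by omega
      rw [this]
  have tele : ∀ x : ZMod N, ∑ j ∈ Finset.range (L + 1), d (x + (j : ZMod N))
      = occ (η (x + ((L + 1 : ℕ) : ZMod N))) - occ (η x) := by
    intro x
    have h := Finset.sum_range_sub (fun k : ℕ => occ (η (x + (k : ZMod N)))) (L + 1)
    have h2 : ∀ j : ℕ, d (x + (j : ZMod N))
        = occ (η (x + ((j + 1 : ℕ) : ZMod N))) - occ (η (x + (j : ZMod N))) := by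
      intro j
      rw [hd]
      simp only
      congr 2
      push_cast
      ring
    rw [Finset.sum_congr rfl fun j _ => h2 j, h]
    simp
  have point : ∀ x : ZMod N,
      q (wcount N (L + 2) η x - 1) * (occ (η (x + ((L + 1 : ℕ) : ZMod N))) - occ (η x))
        = Ψ (wcount N (L + 1) η (x + 1)) - Ψ (wcount N (L + 1) η x) := by
    intro x
    have fV1 : wcount N (L + 2) η x
        = wcount N (L + 1) η x + bv (η (x + ((L + 1 : ℕ) : ZMod N))) := wcount_succ N (L + 1) η x
    have fV2 : wcount N (L + 2) η x = bv (η x) + wcount N (L + 1) η (x + 1) :=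
      wcount_succ' N (L + 1) η x
    cases h1 : η x <;> cases h2 : η (x + ((L + 1 : ℕ) : ZMod N)) <;>
        simp only [h1, h2, occ, bv, if_true, if_false, Bool.false_eq_true, cond] at fV1 fV2 ⊢
    · have : wcount N (L + 1) η (x + 1) = wcount N (L + 1) η x := by omega
      rw [this]; ring
    · have hU : wcount N (L + 1) η (x + 1) = wcount N (L + 1) η x + 1 := by omega
      have hV : wcount N (L + 2) η x - 1 = wcount N (L + 1) η x := by omega
      rw [hU, hV, hΨ]
      simp only
      rw [Finset.sum_range_succ]
      ring
    · have hU : wcount N (L + 1) η x = wcount N (L + 1) η (x + 1) + 1 := by omega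
      have hV : wcount N (L + 2) η x - 1 = wcount N (L + 1) η (x + 1) := by omega
      rw [hU, hV, hΨ]
      simp only
      rw [Finset.sum_range_succ]
      ring
    · have : wcount N (L + 1) η (x + 1) = wcount N (L + 1) η x := by omega
      rw [this]; ring
  calc ∑ t : ZMod N, (∑ j ∈ Finset.range (L + 1), q (nnum N j L (sg N t η))) * d t
      = ∑ t : ZMod N, ∑ j ∈ Finset.range (L + 1), q (nnum N j L (sg N t η)) * d t := by
        exact Finset.sum_congr rfl fun t _ => Finset.sum_mul _ _ _
    _ = ∑ t : ZMod N, ∑ j ∈ Finset.range (L + 1),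
          q (wcount N (L + 2) η (t - (j : ZMod N)) - 1) * d t := by
        refine Finset.sum_congr rfl fun t _ => Finset.sum_congr rfl fun j hj => ?_
        exact step1 t j (Nat.lt_succ_iff.mp (Finset.mem_range.mp hj))
    _ = ∑ j ∈ Finset.range (L + 1), ∑ t : ZMod N,
          q (wcount N (L + 2) η (t - (j : ZMod N)) - 1) * d t := Finset.sum_comm
    _ = ∑ j ∈ Finset.range (L + 1), ∑ x : ZMod N,
          q (wcount N (L + 2) η x - 1) * d (x + (j : ZMod N)) := by
        refine Finset.sum_congr rfl fun j _ => ?_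
        refine (Fintype.sum_equiv (Equiv.addRight (j : ZMod N)) _ _ fun x => ?_).symm
        simp [Equiv.coe_addRight]
    _ = ∑ x : ZMod N, ∑ j ∈ Finset.range (L + 1),
          q (wcount N (L + 2) η x - 1) * d (x + (j : ZMod N)) := Finset.sum_comm
    _ = ∑ x : ZMod N, q (wcount N (L + 2) η x - 1)
          * (occ (η (x + ((L + 1 : ℕ) : ZMod N))) - occ (η x)) := by
        refine Finset.sum_congr rfl fun x _ => ?_
        rw [← Finset.mul_sum, tele x]
    _ = ∑ x : ZMod N, (Ψ (wcount N (L + 1) η (x + 1)) - Ψ (wcount N (L + 1) η x)) := by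
        exact Finset.sum_congr rfl fun x _ => point x
    _ = 0 := by
        rw [Finset.sum_sub_distrib]
        rw [sum_shift_zmod N (fun y => Ψ (wcount N (L + 1) η y)) 1]
        exact sub_self _

/-! ### `pj` as an indicator of the particle count -/

lemma sites_card (N j L : ℕ) (hL : L + 2 ≤ N) (hj : j ≤ L) : (sites N j L).card = L := by
  haveI : NeZero N := ⟨by omega⟩
  haveI : Fact (1 < N) := ⟨by omega⟩
  unfold sites
  rw [torusBox_eq]
  rw [Finset.card_sdiff_of_subset (pair_subset_phi N L j (by omega) hj)]
  rw [Finset.card_image_of_injOn (phi_injOn N L hL j), Finset.card_range]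
  rw [Finset.card_pair zero_ne_one]
  omega

lemma nnum_le (N j L : ℕ) (hL : L + 2 ≤ N) (hj : j ≤ L) (η : ZMod N → Bool) :
    nnum N j L η ≤ L := by
  have := Finset.card_filter_le (sites N j L) (fun i => η i = true)
  rwa [sites_card N j L hL hj] at this

lemma pj_eq_indicator (N n j : ℕ) (hN : n + 2 ≤ N) (hj : j ≤ n) (η : ZMod N → Bool) :
    pj N n j η = if nnum N j n η = n then 1 else 0 := by
  unfold pj
  by_cases hall : ∀ i ∈ sites N j n, η i = true
  · have h1 : ∏ i ∈ sites N j n, occ (η i) = 1 :=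
      Finset.prod_eq_one fun i hi => by rw [hall i hi]; simp [occ]
    have h2 : nnum N j n η = n := by
      unfold nnum
      rw [Finset.filter_true_of_mem hall, sites_card N j n hN hj]
    rw [h1, h2, if_pos rfl]
  · push_neg at hall
    obtain ⟨i, hi, hne⟩ := hall
    have h1 : ∏ x ∈ sites N j n, occ (η x) = 0 := by
      refine Finset.prod_eq_zero hi ?_
      have : η i = false := Bool.not_eq_true _ |>.mp hne
      rw [this]
      simp [occ]
    have h2 : nnum N j n η ≠ n := by
      intro heq
      have hfil : (sites N j n).filter (fun x => η x = true) = sites N j n := by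
        apply Finset.eq_of_subset_of_card_le (Finset.filter_subset _ _)
        rw [sites_card N j n hN hj]
        exact le_of_eq heq.symm
      have : i ∈ (sites N j n).filter (fun x => η x = true) := hfil.symm ▸ hi
      exact hne (Finset.mem_filter.mp this).2
    rw [h1, if_neg h2]

/-! ### Orbit sums of the constraints vanish -/

lemma orbit_pn (N n : ℕ) [NeZero N] (hN : n + 2 ≤ N) (η : ZMod N → Bool) :
    ∑ t : ZMod N, pn N n (sg N t η) * (occ (η (t + 1)) - occ (η t)) = 0 := by
  refine Eq.trans ?_ (orbit_sum_window N n hN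
    (fun r => (1 / ((n : ℝ) + 1)) * (if r = n then 1 else 0)) η)
  refine Finset.sum_congr rfl fun t _ => ?_
  congr 1
  unfold pn
  rw [Finset.mul_sum]
  refine Finset.sum_congr rfl fun j hj => ?_
  rw [pj_eq_indicator N n j hN (Nat.lt_succ_iff.mp (Finset.mem_range.mp hj))]

lemma orbit_pnk (N n k : ℕ) [NeZero N] (hN : n + k + 2 ≤ N) (η : ZMod N → Bool) :
    ∑ t : ZMod N, pnk N n k (sg N t η) * (occ (η (t + 1)) - occ (η t)) = 0 := by
  refine Eq.trans ?_ (orbit_sum_window N (n + k) hN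
    (fun r => (1 / ((n : ℝ) + k + 1)) * (((r.choose n : ℝ) / (((n + k).choose n : ℝ)))
      * (if n + 1 ≤ r then 1 else 0))) η)
  refine Finset.sum_congr rfl fun t _ => ?_
  congr 1
  unfold pnk pkj
  rw [Finset.mul_sum]

lemma orbit_cm (N n ℓ : ℕ) [NeZero N] (m : ℝ) (hN : n + ℓ + 2 ≤ N) (η : ZMod N → Bool) :
    ∑ t : ZMod N, cm N n ℓ m (sg N t η) * (occ (η (t + 1)) - occ (η t)) = 0 := by
  have hpn := orbit_pn N n (by omega) η
  have h2 : ∀ k ∈ Finset.Icc 1 ℓ,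
      ∑ t : ZMod N, (pn N n (sg N t η) - pnk N n k (sg N t η))
        * (occ (η (t + 1)) - occ (η t)) = 0 := by
    intro k hk
    have hk' : k ≤ ℓ := (Finset.mem_Icc.mp hk).2
    have hpnk := orbit_pnk N n k (by omega) η
    simp only [sub_mul]
    rw [Finset.sum_sub_distrib, hpn, hpnk, sub_zero]
  calc ∑ t : ZMod N, cm N n ℓ m (sg N t η) * (occ (η (t + 1)) - occ (η t))
      = ∑ t : ZMod N, (pn N n (sg N t η) * (occ (η (t + 1)) - occ (η t))
          + ∑ k ∈ Finset.Icc 1 ℓ, (-1 : ℝ) ^ k * genBinom m k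
            * ((pn N n (sg N t η) - pnk N n k (sg N t η)) * (occ (η (t + 1)) - occ (η t)))) := by
        refine Finset.sum_congr rfl fun t _ => ?_
        unfold cm
        rw [add_mul, Finset.sum_mul]
        congr 1
        exact Finset.sum_congr rfl fun k _ => mul_assoc _ _ _
    _ = ∑ t : ZMod N, pn N n (sg N t η) * (occ (η (t + 1)) - occ (η t))
          + ∑ t : ZMod N, ∑ k ∈ Finset.Icc 1 ℓ, (-1 : ℝ) ^ k * genBinom m k
            * ((pn N n (sg N t η) - pnk N n k (sg N t η)) * (occ (η (t + 1)) - occ (η t))) :=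
        Finset.sum_add_distrib
    _ = 0 := by
        rw [hpn, zero_add, Finset.sum_comm]
        refine Finset.sum_eq_zero fun k hk => ?_
        rw [← Finset.mul_sum, h2 k hk, mul_zero]

/-! ### Main theorem -/

theorem cm_gradient_condition (N n ℓ : ℕ) [NeZero N]
    (hn : 1 ≤ n) (hℓ : 2 ≤ ℓ) (hN : 2 * (n + ℓ + 2) ≤ N)
    (m : ℝ) (hm : m ∈ Set.Ioo (0 : ℝ) 1) :
    ∃ H : (ZMod N → Bool) → ℝ, ∀ η : ZMod N → Bool,
      cm N n ℓ m η * (occ (η 1) - occ (η 0)) = H (shift N η) - H η := by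
  apply gradient_of_orbit_sum_zero N (fun η => cm N n ℓ m η * (occ (η 1) - occ (η 0)))
  intro η
  refine Eq.trans ?_ (orbit_cm N n ℓ m (by omega) η)
  refine Finset.sum_congr rfl fun t _ => ?_
  simp only [sg]
  rw [zero_add, show (1 : ZMod N) + t = t + 1 from add_comm _ _]
end
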